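/- Let $\sigma \in (1,2)$ and $Q(w) = \frac{1}{\sigma-1} w^{\sigma-2} - \int_0^w (z+1)^{-\sigma}(w-z)^{\sigma-2}\,dz$. Then $0 < Q(w) \le \frac{1}{\sigma-1} w^{\sigma-2}$ for all $0 < w \le 1$, and for every $\varepsilon \in (0, 2-\sigma)$ there exists a constant $C_\varepsilon(\sigma) > 0$ such that $0 < Q(w) \le C_\varepsilon(\sigma)\, w^{-(3-\sigma-\varepsilon)}$ for all $w \ge 1$. Consequently $Q \in L^1(0,\infty)$. -/

import Mathlib

open MeasureTheory Set

private lemma key_int (σ : ℝ) (h1 : 1 < σ) (h2 : σ < 2) (w : ℝ) (hw : 0 < w) :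
    (∫ z in (0:ℝ)..w, (z + 1) ^ (-σ) * (w - z) ^ (σ - 2))
      = w ^ (σ - 1) / ((σ - 1) * (1 + w)) := by
  have hσ1 : (0:ℝ) < σ - 1 := by linarith
  have hw1 : (0:ℝ) < 1 + w := by linarith
  set F : ℝ → ℝ := fun z => -(((w - z) / (1 + z)) ^ (σ - 1)) / ((σ - 1) * (1 + w)) with hF
  have hcont : ContinuousOn F (Icc 0 w) := by
    apply ContinuousOn.div_const
    apply ContinuousOn.neg
    apply ContinuousOn.rpow_const
    · apply ContinuousOn.div
      · exact (continuous_const.sub continuous_id).continuousOn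
      · exact (continuous_const.add continuous_id).continuousOn
      · intro z hz; have := hz.1; intro h; linarith
    · intro z hz; right; linarith
  have hderiv : ∀ z ∈ Ioo (0:ℝ) w, HasDerivWithinAt F
      ((z + 1) ^ (-σ) * (w - z) ^ (σ - 2)) (Ioi z) z := by
    intro z hz
    have hz0 : 0 < z := hz.1
    have hzw : z < w := hz.2
    have hz1 : (0:ℝ) < 1 + z := by linarith
    have hwz : (0:ℝ) < w - z := by linarith
    have hg : HasDerivAt (fun z => (w - z) / (1 + z))
        (((-1) * (1 + z) - (w - z) * 1) / (1 + z) ^ 2) z := by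
      exact HasDerivAt.div (by simpa using ((hasDerivAt_id z).const_sub w))
        (by simpa using (hasDerivAt_id z).const_add 1) (ne_of_gt hz1)
    have hgz : (w - z) / (1 + z) ≠ 0 := ne_of_gt (div_pos hwz hz1)
    have h3 : HasDerivAt (fun z => ((w - z) / (1 + z)) ^ (σ - 1))
        ((((-1) * (1 + z) - (w - z) * 1) / (1 + z) ^ 2) * (σ - 1)
          * ((w - z) / (1 + z)) ^ (σ - 1 - 1)) z := hg.rpow_const (Or.inl hgz)
    have h4 := (h3.neg).div_const ((σ - 1) * (1 + w))
    have heq : -((((-1) * (1 + z) - (w - z) * 1) / (1 + z) ^ 2) * (σ - 1)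
          * ((w - z) / (1 + z)) ^ (σ - 1 - 1)) / ((σ - 1) * (1 + w))
        = (z + 1) ^ (-σ) * (w - z) ^ (σ - 2) := by
      have e1 : σ - 1 - 1 = σ - 2 := by ring
      rw [e1, Real.div_rpow hwz.le hz1.le]
      have e2 : (1 + z) ^ (σ - 2) * (1 + z) ^ (2:ℝ) = (1 + z) ^ σ := by
        rw [← Real.rpow_add hz1]; ring_nf
      have e3 : (z + 1) ^ (-σ) = ((1 + z) ^ σ)⁻¹ := by
        rw [Real.rpow_neg (by linarith), add_comm z 1]
      have e4 : (1 + z) ^ (2:ℝ) = (1 + z) ^ (2:ℕ) := by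
        rw [← Real.rpow_natCast (1 + z) 2]; norm_num
      have hp1 : (0:ℝ) < (1 + z) ^ (σ - 2) := Real.rpow_pos_of_pos hz1 _
      have hp2 : (0:ℝ) < (1 + z) ^ (2:ℝ) := Real.rpow_pos_of_pos hz1 _
      have hpσ : (0:ℝ) < (1 + z) ^ σ := Real.rpow_pos_of_pos hz1 _
      rw [e3]
      rw [← e2, ← e4]
      field_simp
      ring
    rw [← heq]
    exact h4.hasDerivWithinAt
  have hint : IntervalIntegrable (fun z => (z + 1) ^ (-σ) * (w - z) ^ (σ - 2))
      volume 0 w := by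
    have hr : IntervalIntegrable (fun x : ℝ => x ^ (σ - 2)) volume 0 w :=
      intervalIntegral.intervalIntegrable_rpow' (by linarith)
    have hr2 : IntervalIntegrable (fun x : ℝ => (w - x) ^ (σ - 2)) volume 0 w := by
      have := (hr.comp_sub_left w).symm
      simpa using this
    apply hr2.continuousOn_mul
    apply ContinuousOn.rpow_const
    · exact (continuous_id.add continuous_const).continuousOn
    · intro z hz
      left
      rcases mem_uIcc.mp hz with h | h
      · have := h.1; intro hc; nlinarith
      · have := h.2; intro hc; nlinarith
  have := intervalIntegral.integral_eq_sub_of_hasDeriv_right_of_le hw.le hcont hderiv hint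
  rw [this, hF]
  have e0 : ((w - w) / (1 + w)) ^ (σ - 1) = 0 := by
    rw [sub_self, zero_div, Real.zero_rpow (by linarith)]
  have e1 : ((w - 0) / (1 + 0)) ^ (σ - 1) = w ^ (σ - 1) := by norm_num
  simp only [e0, e1]
  field_simp
  ring

private lemma Qform (σ : ℝ) (h1 : 1 < σ) (h2 : σ < 2) (Q : ℝ → ℝ)
    (hQ : ∀ w : ℝ, 0 < w →
      Q w = (1 / (σ - 1)) * w ^ (σ - 2)
        - ∫ z in (0:ℝ)..w, (z + 1) ^ (-σ) * (w - z) ^ (σ - 2))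
    (w : ℝ) (hw : 0 < w) : Q w = w ^ (σ - 2) / ((σ - 1) * (1 + w)) := by
  rw [hQ w hw, key_int σ h1 h2 w hw]
  have hσ1 : (0:ℝ) < σ - 1 := by linarith
  have hw1 : (0:ℝ) < 1 + w := by linarith
  have e : w ^ (σ - 1) = w ^ (σ - 2) * w := by
    rw [← Real.rpow_add_one (ne_of_gt hw)]; ring_nf
  rw [e]
  field_simp
  ring

theorem stmt4 (σ : ℝ) (hσ : σ ∈ Ioo (1:ℝ) 2) (Q : ℝ → ℝ)
    (hQ : ∀ w : ℝ, 0 < w →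
      Q w = (1 / (σ - 1)) * w ^ (σ - 2)
        - ∫ z in (0:ℝ)..w, (z + 1) ^ (-σ) * (w - z) ^ (σ - 2)) :
    (∀ w : ℝ, 0 < w → w ≤ 1 → 0 < Q w ∧ Q w ≤ (1 / (σ - 1)) * w ^ (σ - 2)) ∧
    (∀ ε : ℝ, ε ∈ Ioo 0 (2 - σ) → ∃ C > (0:ℝ), ∀ w : ℝ, 1 ≤ w →
      0 < Q w ∧ Q w ≤ C * w ^ (-(3 - σ - ε))) ∧
    IntegrableOn Q (Ioi (0:ℝ)) volume := by
  obtain ⟨h1, h2⟩ := hσ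
  have hσ1 : (0:ℝ) < σ - 1 := by linarith
  have hform := Qform σ h1 h2 Q hQ
  have hQpos : ∀ w : ℝ, 0 < w → 0 < Q w := by
    intro w hw
    rw [hform w hw]
    exact div_pos (Real.rpow_pos_of_pos hw _) (by positivity)
  refine ⟨?_, ?_, ?_⟩
  · intro w hw _
    refine ⟨hQpos w hw, ?_⟩
    rw [hform w hw]
    have he : (1 / (σ - 1)) * w ^ (σ - 2) = w ^ (σ - 2) / (σ - 1) := by ring
    rw [he]
    have hp : (0:ℝ) < w ^ (σ - 2) := Real.rpow_pos_of_pos hw _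
    apply div_le_div_of_nonneg_left hp.le hσ1
    nlinarith
  · intro ε hε
    refine ⟨1 / (σ - 1), by positivity, ?_⟩
    intro w hw
    have hw0 : (0:ℝ) < w := by linarith
    refine ⟨hQpos w hw0, ?_⟩
    rw [hform w hw0]
    have step1 : w ^ (σ - 2) / ((σ - 1) * (1 + w))
        ≤ w ^ (σ - 2) / ((σ - 1) * w) := by
      apply div_le_div_of_nonneg_left (le_of_lt (Real.rpow_pos_of_pos hw0 _)) (by positivity)
      nlinarith
    have step2 : w ^ (σ - 2) / ((σ - 1) * w) = (1 / (σ - 1)) * w ^ (σ - 3) := by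
      have : w ^ (σ - 3) = w ^ (σ - 2) / w := by
        rw [eq_div_iff (ne_of_gt hw0), ← Real.rpow_add_one (ne_of_gt hw0)]; ring_nf
      rw [this]; field_simp
    have step3 : w ^ (σ - 3) ≤ w ^ (-(3 - σ - ε)) := by
      apply Real.rpow_le_rpow_of_exponent_le hw
      have := hε.1; linarith
    calc w ^ (σ - 2) / ((σ - 1) * (1 + w)) ≤ (1 / (σ - 1)) * w ^ (σ - 3) := by
          rw [← step2]; exact step1
      _ ≤ (1 / (σ - 1)) * w ^ (-(3 - σ - ε)) := by
          have h0 : (0:ℝ) ≤ 1 / (σ - 1) := by positivity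
          exact mul_le_mul_of_nonneg_left step3 h0
  · -- integrability
    have hmeas : ∀ s : Set ℝ, s ⊆ Ioi (0:ℝ) → MeasurableSet s →
        IntegrableOn (fun w => w ^ (σ - 2) / ((σ - 1) * (1 + w))) s volume → IntegrableOn Q s volume := by
      intro s hs hms hint
      apply hint.congr_fun _ hms
      intro w hw
      exact (hform w (hs hw)).symm
    have hsplit : Ioi (0:ℝ) = Ioc (0:ℝ) 1 ∪ Ioi (1:ℝ) := by
      rw [Ioc_union_Ioi_eq_Ioi]; norm_num
    rw [hsplit]
    apply IntegrableOn.union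
    · apply hmeas _ Ioc_subset_Ioi_self measurableSet_Ioc
      have hbound : IntegrableOn (fun w : ℝ => (1 / (σ - 1)) * w ^ (σ - 2)) (Ioc 0 1) volume := by
        have h := intervalIntegral.intervalIntegrable_rpow' (a := (0:ℝ)) (b := 1)
          (by linarith : (-1:ℝ) < σ - 2)
        rw [intervalIntegrable_iff_integrableOn_Ioc_of_le (by norm_num : (0:ℝ) ≤ 1)] at h
        exact h.const_mul _
      apply Integrable.mono' hbound
      · apply ContinuousOn.aestronglyMeasurable _ measurableSet_Ioc
        apply ContinuousOn.div
        · apply ContinuousOn.rpow_const continuousOn_id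
          intro w hw; left; exact ne_of_gt hw.1
        · exact (continuous_const.mul (continuous_const.add continuous_id)).continuousOn
        · intro w hw; have := hw.1; positivity
      · rw [ae_restrict_iff' measurableSet_Ioc]
        filter_upwards with w hw
        have hw0 := hw.1
        have hp : (0:ℝ) < w ^ (σ - 2) := Real.rpow_pos_of_pos hw0 _
        rw [Real.norm_eq_abs, abs_of_pos (by positivity)]
        have he : (1 / (σ - 1)) * w ^ (σ - 2) = w ^ (σ - 2) / (σ - 1) := by ring
        rw [he]
        apply div_le_div_of_nonneg_left hp.le hσ1
        nlinarith
    · apply hmeas _ (Ioi_subset_Ioi zero_le_one) measurableSet_Ioi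
      have hbound : IntegrableOn (fun w : ℝ => (1 / (σ - 1)) * w ^ (σ - 3)) (Ioi 1) volume := by
        apply Integrable.const_mul
        exact integrableOn_Ioi_rpow_of_lt (by linarith) one_pos
      apply Integrable.mono' hbound
      · apply ContinuousOn.aestronglyMeasurable _ measurableSet_Ioi
        apply ContinuousOn.div
        · apply ContinuousOn.rpow_const continuousOn_id
          intro w hw
          simp only [mem_Ioi] at hw
          exact Or.inl (ne_of_gt (lt_trans one_pos hw))
        · exact (continuous_const.mul (continuous_const.add continuous_id)).continuousOn
        · intro w hw; simp only [mem_Ioi] at hw; positivity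
      · rw [ae_restrict_iff' measurableSet_Ioi]
        filter_upwards with w hw
        simp only [mem_Ioi] at hw
        have hw0 : (0:ℝ) < w := by linarith
        have hp : (0:ℝ) < w ^ (σ - 2) := Real.rpow_pos_of_pos hw0 _
        rw [Real.norm_eq_abs, abs_of_pos (by positivity)]
        have e : w ^ (σ - 3) = w ^ (σ - 2) / w := by
          rw [eq_div_iff (ne_of_gt hw0), ← Real.rpow_add_one (ne_of_gt hw0)]; ring_nf
        rw [e]
        have he : (1 / (σ - 1)) * (w ^ (σ - 2) / w) = w ^ (σ - 2) / ((σ - 1) * w) := by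
          field_simp
        rw [he]
        apply div_le_div_of_nonneg_left hp.le (by positivity)
        nlinarith
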